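/- arXiv:2201.09087 — 2 statements merged into one kernel-verified Lean document; each statement's English description precedes it below -/
import Mathlib

section
/- Let (A, d) be a diffuse metric space, i.e., d : A → A → ℝ satisfies 0 ≤ d(x,y) ≤ 1, d(x,y) = d(y,x), and d(x,z) ≤ d(x,y) + d(y,z) for all x, y, z ∈ A. Then the Łukaszyk–Karmowski distance LK d on finitely supported probability distributions on A is again a diffuse metric: for all finitely supported distributions μ, ν, ρ on A one has 0 ≤ LK d(μ,ν) ≤ 1, LK d(μ,ν) = LK d(ν,μ), and LK d(μ,ρ) ≤ LK d(μ,ν) + LK d(ν,ρ). -/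
/-- The Łukaszyk–Karmowski distance between finitely supported (real-valued)
functions `μ ν : A →₀ ℝ`, relative to a fuzzy relation `d : A → A → ℝ`. -/
noncomputable def LK {A : Type*} (d : A → A → ℝ) (μ ν : A →₀ ℝ) : ℝ :=
  ∑ x ∈ μ.support, ∑ y ∈ ν.support, μ x * ν y * d x y

/-- A finitely supported probability distribution: pointwise nonnegative and
summing to 1. -/
def IsDist {A : Type*} (μ : A →₀ ℝ) : Prop :=
  (∀ x, 0 ≤ μ x) ∧ ∑ x ∈ μ.support, μ x = 1

/-- If `(A, d)` is a diffuse metric space (bounded by 1, symmetric, triangle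
inequality), then `LK d` is again a diffuse metric on finitely supported
probability distributions. -/
theorem lk_diffuse_metric {A : Type*} (d : A → A → ℝ)
    (hbd : ∀ x y, 0 ≤ d x y ∧ d x y ≤ 1)
    (hsymm : ∀ x y, d x y = d y x)
    (htri : ∀ x y z, d x z ≤ d x y + d y z)
    (μ ν ρ : A →₀ ℝ) (hμ : IsDist μ) (hν : IsDist ν) (hρ : IsDist ρ) :
    (0 ≤ LK d μ ν ∧ LK d μ ν ≤ 1) ∧
      LK d μ ν = LK d ν μ ∧
      LK d μ ρ ≤ LK d μ ν + LK d ν ρ := by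
  obtain ⟨hμ0, hμ1⟩ := hμ
  obtain ⟨hν0, hν1⟩ := hν
  obtain ⟨hρ0, hρ1⟩ := hρ
  refine ⟨⟨?_, ?_⟩, ?_, ?_⟩
  · apply Finset.sum_nonneg; intro x _
    apply Finset.sum_nonneg; intro y _
    exact mul_nonneg (mul_nonneg (hμ0 x) (hν0 y)) (hbd x y).1
  · calc LK d μ ν ≤ ∑ x ∈ μ.support, ∑ y ∈ ν.support, μ x * ν y := by
          apply Finset.sum_le_sum; intro x _
          apply Finset.sum_le_sum; intro y _
          exact mul_le_of_le_one_right (mul_nonneg (hμ0 x) (hν0 y)) (hbd x y).2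
      _ = 1 := by
          simp only [← Finset.mul_sum, hν1, mul_one]
          exact hμ1
  · rw [LK, LK, Finset.sum_comm]
    apply Finset.sum_congr rfl; intro y _
    apply Finset.sum_congr rfl; intro x _
    rw [hsymm]; ring
  · have key : (∑ x ∈ μ.support, ∑ y ∈ ν.support, ∑ z ∈ ρ.support,
        μ x * ν y * ρ z * d x z) = LK d μ ρ := by
      rw [LK]
      apply Finset.sum_congr rfl; intro x _
      rw [Finset.sum_comm]
      apply Finset.sum_congr rfl; intro z _
      rw [show μ x * ρ z * d x z = (∑ y ∈ ν.support, ν y) * (μ x * ρ z * d x z) by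
        rw [hν1, one_mul], Finset.sum_mul]
      apply Finset.sum_congr rfl; intro y _; ring
    have h1 : (∑ x ∈ μ.support, ∑ y ∈ ν.support, ∑ z ∈ ρ.support,
        μ x * ν y * ρ z * d x y) = LK d μ ν := by
      rw [LK]
      apply Finset.sum_congr rfl; intro x _
      apply Finset.sum_congr rfl; intro y _
      rw [show μ x * ν y * d x y = (∑ z ∈ ρ.support, ρ z) * (μ x * ν y * d x y) by
        rw [hρ1, one_mul], Finset.sum_mul]
      apply Finset.sum_congr rfl; intro z _; ring
    have h2 : (∑ x ∈ μ.support, ∑ y ∈ ν.support, ∑ z ∈ ρ.support,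
        μ x * ν y * ρ z * d y z) = LK d ν ρ := by
      rw [LK, show (∑ y ∈ ν.support, ∑ z ∈ ρ.support, ν y * ρ z * d y z)
          = (∑ x ∈ μ.support, μ x) * ∑ y ∈ ν.support, ∑ z ∈ ρ.support, ν y * ρ z * d y z by
        rw [hμ1, one_mul], Finset.sum_mul]
      apply Finset.sum_congr rfl; intro x _
      rw [Finset.mul_sum]
      apply Finset.sum_congr rfl; intro y _
      rw [Finset.mul_sum]
      apply Finset.sum_congr rfl; intro z _; ring
    rw [← key, ← h1, ← h2, ← Finset.sum_add_distrib]
    apply Finset.sum_le_sum; intro x _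
    rw [← Finset.sum_add_distrib]
    apply Finset.sum_le_sum; intro y _
    rw [← Finset.sum_add_distrib]
    apply Finset.sum_le_sum; intro z _
    have hn : 0 ≤ μ x * ν y * ρ z :=
      mul_nonneg (mul_nonneg (hμ0 x) (hν0 y)) (hρ0 z)
    nlinarith [mul_le_mul_of_nonneg_left (htri x y z) hn]
end

section
/- There exists a diffuse metric space (A, d) for which the convex combination operation +_{1/2} on finitely supported probability distributions fails to be nonexpansive with respect to the sup-product of the Łukaszyk–Karmowski distance. Concretely, take A = {a, b} (a two-element type) with d(a,a) = d(b,b) = 1/2 and d(a,b) = d(b,a) = 1 (this d is a diffuse metric). Then with μ = (1/2)·δ_a + (1/2)·δ_b one has LK d(μ, μ) = 3/4, while max{ LK d(δ_a, δ_a), LK d(δ_b, δ_b) } = 1/2, so LK d(μ, μ) > max{ LK d(δ_a, δ_a), LK d(δ_b, δ_b) }. -/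
/-- The Dirac distribution at `a`. -/
noncomputable def dirac {A : Type*} (a : A) : A →₀ ℝ := Finsupp.single a 1

lemma LK_univ {A : Type*} [Fintype A] [DecidableEq A] (d : A → A → ℝ) (μ ν : A →₀ ℝ) :
    LK d μ ν = ∑ x ∈ Finset.univ, ∑ y ∈ Finset.univ, μ x * ν y * d x y := by
  unfold LK
  rw [Finset.sum_subset (Finset.subset_univ _)]
  · apply Finset.sum_congr rfl
    intro x _
    rw [Finset.sum_subset (Finset.subset_univ _)]
    intro y _ hy
    rw [Finsupp.notMem_support_iff.mp hy]
    ring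
  · intro x _ hx
    rw [Finsupp.notMem_support_iff.mp hx]
    simp

/-- On the two-element space with `d(x,x) = 1/2` and `d(x,y) = 1` for `x ≠ y`
(a diffuse metric), the convex combination `+_{1/2}` fails to be nonexpansive
for the sup-product of the ŁK distance. -/
theorem lk_convex_comb_not_nonexpansive :
    let d : Bool → Bool → ℝ := fun x y => if x = y then 1 / 2 else 1
    let μ : Bool →₀ ℝ := (1 / 2 : ℝ) • dirac true + (1 / 2 : ℝ) • dirac false
    (∀ x y, 0 ≤ d x y ∧ d x y ≤ 1) ∧
    (∀ x y, d x y = d y x) ∧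
    (∀ x y z, d x z ≤ d x y + d y z) ∧
    LK d μ μ = 3 / 4 ∧
    max (LK d (dirac true) (dirac true)) (LK d (dirac false) (dirac false))
      = 1 / 2 ∧
    LK d μ μ >
      max (LK d (dirac true) (dirac true))
        (LK d (dirac false) (dirac false)) := by
  intro d μ
  have h1 : LK d μ μ = 3 / 4 := by
    rw [LK_univ]
    simp [Fintype.sum_bool, μ, d, dirac, Finsupp.single_apply]
    norm_num
  have h2 : ∀ a : Bool, LK d (dirac a) (dirac a) = 1 / 2 := by
    intro a
    rw [LK_univ]
    simp [Fintype.sum_bool, d, dirac, Finsupp.single_apply]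
    cases a <;> norm_num
  refine ⟨?_, ?_, ?_, h1, ?_, ?_⟩
  · intro x y; dsimp [d]; split <;> norm_num
  · intro x y; dsimp [d]; cases x <;> cases y <;> norm_num
  · intro x y z; dsimp [d]; cases x <;> cases y <;> cases z <;> norm_num
  · rw [h2, h2]; simp
  · rw [h1, h2, h2]; norm_num
end
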